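/- Let a_{αβ} be a symmetric positive definite 2×2 matrix and a^{αβ} its inverse. The compliance tensor a_{αβγδ} = (1/(2μ))[½(a_{αδ}a_{βγ} + a_{βδ}a_{αγ}) − (λ/(2μ+3λ)) a_{αβ}a_{γδ}] is the inverse of the elastic tensor a^{αβγδ} = μ(a^{αγ}a^{βδ} + a^{βγ}a^{αδ}) + (2μλ/(2μ+λ)) a^{αβ}a^{γδ} on symmetric tensors: for symmetric 2×2 tensors σ and γ, σ^{αβ} = a^{αβγδ} γ_{γδ} if and only if γ_{αβ} = a_{αβγδ} σ^{γδ}. -/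
import Mathlib

/-- Entrywise form of the elastic tensor applied to a symmetric tensor. -/
lemma elastic_entry (B γ : Matrix (Fin 2) (Fin 2) ℝ)
    (hB : ∀ i j, B i j = B j i) (hγ : γ 1 0 = γ 0 1)
    (μ C : ℝ) (α β : Fin 2) :
    (∑ g : Fin 2, ∑ d : Fin 2,
        (μ * (B α g * B β d + B β g * B α d) + C * (B α β * B g d)) * γ g d)
      = 2 * μ * (B * γ * B) α β + C * (B * γ).trace * B α β := by
  simp only [Matrix.mul_apply, Matrix.trace, Matrix.diag_apply, Fin.sum_univ_two, hγ]
  rw [hB 0 β, hB 1 β]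
  ring

/-- Entrywise form of the compliance tensor applied to a symmetric tensor. -/
lemma compliance_entry (a σ : Matrix (Fin 2) (Fin 2) ℝ)
    (hA : ∀ i j, a i j = a j i) (hss : σ 1 0 = σ 0 1)
    (μ k : ℝ) (α β : Fin 2) :
    (∑ g : Fin 2, ∑ d : Fin 2,
        (1 / (2 * μ) *
          (1 / 2 * (a α d * a β g + a β d * a α g) -
            k * (a α β * a g d))) * σ g d)
      = 1 / (2 * μ) * ((a * σ * a) α β - k * (a * σ).trace * a α β) := by
  simp only [Matrix.mul_apply, Matrix.trace, Matrix.diag_apply, Fin.sum_univ_two, hss]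
  rw [hA 0 β, hA 1 β]
  ring

theorem stmt8
    (a ainv : Matrix (Fin 2) (Fin 2) ℝ) (ha : a.PosDef)
    (hinv : a * ainv = 1)
    (μ lam : ℝ) (hμ : 0 < μ) (hlam : 0 ≤ lam)
    (σ γm : Matrix (Fin 2) (Fin 2) ℝ) (hσ : σ.IsSymm) (hγ : γm.IsSymm) :
    (∀ α β : Fin 2,
        σ α β = ∑ g : Fin 2, ∑ d : Fin 2,
          (μ * (ainv α g * ainv β d + ainv β g * ainv α d) +
            2 * μ * lam / (2 * μ + lam) * (ainv α β * ainv g d)) * γm g d)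
      ↔
    (∀ α β : Fin 2,
        γm α β = ∑ g : Fin 2, ∑ d : Fin 2,
          (1 / (2 * μ) *
            (1 / 2 * (a α d * a β g + a β d * a α g) -
              lam / (2 * μ + 3 * lam) * (a α β * a g d))) * σ g d) := by
  have hμ' : (2:ℝ) * μ ≠ 0 := by positivity
  have h1 : (2:ℝ) * μ + lam ≠ 0 := by positivity
  have h3 : (2:ℝ) * μ + 3 * lam ≠ 0 := by positivity
  have hBA : ainv * a = 1 := mul_eq_one_comm.mp hinv
  have hA : ∀ i j : Fin 2, a i j = a j i := by
    intro i j
    have := ha.isHermitian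
    rw [Matrix.IsHermitian] at this
    have := congrFun (congrFun this j) i
    simpa [Matrix.conjTranspose_apply] using this
  have haT : a.transpose = a := by
    ext i j
    rw [Matrix.transpose_apply, hA j i]
  have hB : ∀ i j : Fin 2, ainv i j = ainv j i := by
    have hT : ainv.transpose * a = 1 := by
      have := congrArg Matrix.transpose hinv
      rwa [Matrix.transpose_mul, Matrix.transpose_one, haT] at this
    have : ainv.transpose = ainv := by
      calc ainv.transpose = ainv.transpose * (a * ainv) := by rw [hinv, Matrix.mul_one]
        _ = (ainv.transpose * a) * ainv := by rw [Matrix.mul_assoc]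
        _ = ainv := by rw [hT, Matrix.one_mul]
    intro i j
    conv_lhs => rw [← this]
    rw [Matrix.transpose_apply]
  have hss : σ 1 0 = σ 0 1 := by
    have := congrFun (congrFun hσ 0) 1
    simpa [Matrix.transpose_apply] using this
  have hgs : γm 1 0 = γm 0 1 := by
    have := congrFun (congrFun hγ 0) 1
    simpa [Matrix.transpose_apply] using this
  set C : ℝ := 2 * μ * lam / (2 * μ + lam) with hC
  set k : ℝ := lam / (2 * μ + 3 * lam) with hk
  -- matrix algebra helpers
  have keyA : ∀ M : Matrix (Fin 2) (Fin 2) ℝ, a * (ainv * M * ainv) * a = M := by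
    intro M
    calc a * (ainv * M * ainv) * a = (a * ainv) * M * (ainv * a) := by
          simp only [Matrix.mul_assoc]
      _ = M := by rw [hinv, hBA, Matrix.one_mul, Matrix.mul_one]
  have keyB : ∀ M : Matrix (Fin 2) (Fin 2) ℝ, ainv * (a * M * a) * ainv = M := by
    intro M
    calc ainv * (a * M * a) * ainv = (ainv * a) * M * (a * ainv) := by
          simp only [Matrix.mul_assoc]
      _ = M := by rw [hinv, hBA, Matrix.one_mul, Matrix.mul_one]
  constructor
  · intro h α β
    -- matrix form of the hypothesis
    have hσm : σ = (2 * μ) • (ainv * γm * ainv) + (C * (ainv * γm).trace) • ainv := by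
      ext i j
      rw [h i j, elastic_entry ainv γm hB hgs μ C i j]
      simp [Matrix.add_apply, Matrix.smul_apply, smul_eq_mul]
    set t : ℝ := (ainv * γm).trace with ht
    have h2 : a * σ * a = (2 * μ) • γm + (C * t) • a := by
      rw [hσm]
      simp only [Matrix.mul_add, Matrix.add_mul, Matrix.mul_smul, Matrix.smul_mul]
      rw [keyA γm]
      congr 1
      rw [show a * ainv * a = a by rw [hinv, Matrix.one_mul]]
    have h3t : (a * σ).trace = (2 * μ + 2 * C) * t := by
      rw [hσm]
      simp only [Matrix.mul_add, Matrix.mul_smul, Matrix.trace_add, Matrix.trace_smul,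
        smul_eq_mul]
      have e1 : a * (ainv * γm * ainv) = γm * ainv := by
        calc a * (ainv * γm * ainv) = (a * ainv) * (γm * ainv) := by
              simp only [Matrix.mul_assoc]
          _ = γm * ainv := by rw [hinv, Matrix.one_mul]
      rw [e1, hinv, Matrix.trace_one, Matrix.trace_mul_comm γm ainv]
      simp [ht]
      ring
    rw [compliance_entry a σ hA hss μ k α β, h2, h3t]
    simp only [Matrix.add_apply, Matrix.smul_apply, smul_eq_mul]
    rw [hC, hk]
    field_simp
    ring
  · intro h α β
    have hγm : γm = (1 / (2 * μ)) • (a * σ * a) + (-(k / (2 * μ)) * (a * σ).trace) • a := by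
      ext i j
      rw [h i j, compliance_entry a σ hA hss μ k i j]
      simp [Matrix.add_apply, Matrix.smul_apply, smul_eq_mul]
      ring
    set u : ℝ := (a * σ).trace with hu
    have h2 : ainv * γm * ainv = (1 / (2 * μ)) • σ + (-(k / (2 * μ)) * u) • ainv := by
      rw [hγm]
      simp only [Matrix.mul_add, Matrix.add_mul, Matrix.mul_smul, Matrix.smul_mul]
      rw [keyB σ]
      congr 1
      rw [show ainv * a * ainv = ainv by rw [hBA, Matrix.one_mul]]
    have h3t : (ainv * γm).trace = (1 / (2 * μ)) * u + (-(k / (2 * μ)) * u) * 2 := by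
      rw [hγm]
      simp only [Matrix.mul_add, Matrix.mul_smul, Matrix.trace_add, Matrix.trace_smul,
        smul_eq_mul]
      have e1 : ainv * (a * σ * a) = σ * a := by
        calc ainv * (a * σ * a) = (ainv * a) * (σ * a) := by
              simp only [Matrix.mul_assoc]
          _ = σ * a := by rw [hBA, Matrix.one_mul]
      rw [e1, hBA, Matrix.trace_one, Matrix.trace_mul_comm σ a]
      simp [hu]
      try ring
    rw [elastic_entry ainv γm hB hgs μ C α β, h2, h3t]
    simp only [Matrix.add_apply, Matrix.smul_apply, smul_eq_mul]
    rw [hC, hk]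
    field_simp
    ring
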